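/- The Euler characteristic density of order 1 for the noncentral χ²₂(λ) random field is ρ₁(λ, x) = e^{−(λ+x)/2}·√(x/(2π))·I₀(√(λx)) for all λ ≥ 0 and x > 0. -/

import Mathlib

open Real

/-- Modified Bessel function of the first kind of (nonnegative integer) order `n`. -/
noncomputable def besselI (n : ℕ) (x : ℝ) : ℝ :=
  ∑' i : ℕ, (x / 2) ^ (2 * i + n) / ((Nat.factorial i : ℝ) * (Nat.factorial (i + n) : ℝ))

/-- The Euler characteristic density `ρ_j(λ, x)` of a noncentral `χ²₂(λ)` random field
(equation (14) of the paper):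
`ρ_j(λ,x) = e^{−(λ+x)/2}/(2π)^{j/2} · Σ_{i=0}^∞ λ^i x^{1+i−j/2}/(4^i i! Γ(1+i)) ·
  Σ_{l=0}^{⌊(j−1)/2⌋} Σ_{m=0}^{j−1−2l} 1_{2 ≥ j−m−2l−2i} C(1+2i, j−1−m−2l) ·
    (−1)^{j−1+m+l} (j−1)! x^{m+l}/(m! l! 2^l)`. -/
noncomputable def ecDensity (j : ℕ) (lam x : ℝ) : ℝ :=
  Real.exp (-(lam + x) / 2) / (2 * π) ^ ((j : ℝ) / 2) *
    ∑' i : ℕ,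
      lam ^ i * x ^ ((1 : ℝ) + i - j / 2) /
          (4 ^ i * (Nat.factorial i : ℝ) * Real.Gamma (1 + i)) *
        ∑ l ∈ Finset.range ((j - 1) / 2 + 1), ∑ m ∈ Finset.range (j - 1 - 2 * l + 1),
          (if (2 : ℤ) ≥ (j : ℤ) - m - 2 * l - 2 * i then 1 else 0) *
            (Nat.choose (1 + 2 * i) (j - 1 - m - 2 * l) : ℝ) *
            (-1) ^ (j - 1 + m + l) * (Nat.factorial (j - 1) : ℝ) * x ^ (m + l) /
            ((Nat.factorial m : ℝ) * (Nat.factorial l : ℝ) * 2 ^ l)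

/-- The order-1 EC density of the noncentral `χ²₂(λ)` field:
`ρ₁(λ, x) = e^{−(λ+x)/2}·√(x/(2π))·I₀(√(λx))`. -/
theorem ecDensity_one (lam x : ℝ) (hlam : 0 ≤ lam) (hx : 0 < x) :
    ecDensity 1 lam x =
      Real.exp (-(lam + x) / 2) * Real.sqrt (x / (2 * π)) *
        besselI 0 (Real.sqrt (lam * x)) := by
  have h2π : (0:ℝ) < 2 * π := by positivity
  unfold ecDensity besselI
  norm_num
  have hterm : ∀ i : ℕ,
      (if (1:ℤ) ≤ 2 + 2 * (i:ℤ) then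
        lam ^ i * x ^ ((1:ℝ) + i - 1 / 2) / (4 ^ i * (Nat.factorial i : ℝ) * Gamma (1 + i))
       else 0)
      = Real.sqrt x * ((Real.sqrt (lam * x) / 2) ^ (2 * i) /
          ((Nat.factorial i : ℝ) * (Nat.factorial i : ℝ))) := by
    intro i
    rw [if_pos (by omega)]
    have hΓ : Real.Gamma (1 + i) = (Nat.factorial i : ℝ) := by
      rw [add_comm]; exact_mod_cast Real.Gamma_nat_eq_factorial i
    have hx2 : x ^ ((1 : ℝ) + i - 1 / 2) = Real.sqrt x * x ^ i := by
      rw [show ((1 : ℝ) + i - 1 / 2) = 1/2 + i by push_cast; ring,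
        Real.rpow_add hx, Real.rpow_natCast, ← Real.sqrt_eq_rpow]
    have hb : (Real.sqrt (lam * x) / 2) ^ (2 * i) = (lam * x / 4) ^ i := by
      rw [pow_mul, div_pow, Real.sq_sqrt (by positivity)]
      norm_num
    rw [hΓ, hx2, hb]
    have h4 : (4:ℝ)^i ≠ 0 := by positivity
    have hf : (Nat.factorial i : ℝ) ≠ 0 := by positivity
    field_simp
    rw [← mul_pow, ← mul_pow]; congr 1; ring
  rw [tsum_congr hterm, tsum_mul_left,
    Real.sqrt_div hx.le, show ((1:ℝ)/2) = (1/2:ℝ) from rfl,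
    ← Real.sqrt_eq_rpow]
  ring
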